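/- Every finite implication algebra has a finite representation: it embeds into (℘(X), →) for some finite set X, where a → b = (X \ a) ∪ b. -/

import Mathlib

namespace ImpRep

variable {A : Type*}

/-- `f a a` is a constant (the top element `1`). -/
theorem const (f : A → A → A)
    (hC : ∀ a b, f (f a b) a = a)
    (hQ : ∀ a b, f (f a b) b = f (f b a) a)
    (hE : ∀ a b c, f a (f b c) = f b (f a c)) :
    ∀ a b, f a a = f b b := by
  have s1 : ∀ x, f (f x x) (f x x) = f x x := by
    intro x
    calc f (f x x) (f x x) = f x (f (f x x) x) := (hE x (f x x) x).symm
      _ = f x x := by rw [hC]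
  have s2 : ∀ a b, f (f b (f a a)) (f a a) = f a a := by
    intro a b
    have h1 : f b (f a a) = f a (f b a) := (hE a b a).symm
    rw [h1]
    calc f (f a (f b a)) (f a a) = f a (f (f a (f b a)) a) := (hE a (f a (f b a)) a).symm
      _ = f a a := by rw [hC]
  have s3 : ∀ a b, f (f a a) (f b (f a a)) = f b (f a a) := by
    intro a b
    calc f (f a a) (f b (f a a)) = f b (f (f a a) (f a a)) := hE (f a a) b (f a a)
      _ = f b (f a a) := by rw [s1]
  have s4 : ∀ a b, f (f b (f a a)) (f b (f a a)) = f a a := by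
    intro a b
    have h := hQ (f a a) (f b (f a a))
    rw [s3, s2] at h
    exact h
  have s5 : ∀ a b, f (f b (f a a)) (f a (f b b)) = f a (f b b) := by
    intro a b
    have inner : f (f b (f a a)) (f b b) = f b b := by
      calc f (f b (f a a)) (f b b) = f b (f (f b (f a a)) b) :=
            (hE b (f b (f a a)) b).symm
        _ = f b b := by rw [hC]
    calc f (f b (f a a)) (f a (f b b))
        = f a (f (f b (f a a)) (f b b)) := (hE a (f b (f a a)) (f b b)).symm
      _ = f a (f b b) := by rw [inner]
  intro a b
  have h := hQ (f b (f a a)) (f a (f b b))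
  rw [s5 a b, s5 b a] at h
  -- h : f (f a (f b b)) (f a (f b b)) = f (f b (f a a)) (f b (f a a))
  rw [s4 a b] at h
  -- h : f (f a (f b b)) (f a (f b b)) = f a a
  have h2 := s4 b a
  -- h2 : f (f a (f b b)) (f a (f b b)) = f b b
  rw [h2] at h
  exact h.symm

section
variable (f : A → A → A)
variable (hC : ∀ a b, f (f a b) a = a)
variable (hQ : ∀ a b, f (f a b) b = f (f b a) a)
variable (hE : ∀ a b c, f a (f b c) = f b (f a c))

include hC hQ hE

/-- `1 → b = b`. -/
theorem leftid (a b : A) : f (f a a) b = b := by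
  rw [const f hC hQ hE a b, hC]

/-- `a → (a → a) = a → a`. -/
theorem N1 (a : A) : f a (f a a) = f a a := by
  set u := f a a with hu
  have hua : f u a = a := hC a a
  have t : f (f a u) (f a u) = f a (f a a) := by
    calc f (f a u) (f a u) = f a (f (f a u) u) := (hE a (f a u) u).symm
      _ = f a (f (f u a) a) := by rw [hQ]
      _ = f a (f a a) := by rw [hua]
  have t2 : f (f a u) (f a u) = f a a := const f hC hQ hE _ a
  rw [t] at t2
  exact t2

/-- `x → 1 = 1`. -/
theorem rightone (x a : A) : f x (f a a) = f a a := by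
  rw [const f hC hQ hE a x, N1 f hC hQ hE x, const f hC hQ hE x a]

/-- antisymmetry of the induced order. -/
theorem antisym {x y : A} (h1 : f x y = f x x) (h2 : f y x = f y y) : x = y := by
  have h := hQ x y
  rw [h1, h2, leftid f hC hQ hE, leftid f hC hQ hE] at h
  exact h.symm

/-- contraction law `x → (x → b) = x → b`. -/
theorem K2 (x b : A) : f x (f x b) = f x b := by
  have h1 : f (f x (f x b)) (f x b) = f (f x (f x b)) (f x (f x b)) := by
    have h := hQ x (f x b)
    rw [hC] at h
    -- h : f (f x (f x b)) (f x b) = f x x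
    rw [h, const f hC hQ hE x (f x (f x b))]
  have h2 : f (f x b) (f x (f x b)) = f (f x b) (f x b) := by
    calc f (f x b) (f x (f x b)) = f x (f (f x b) (f x b)) := hE (f x b) x (f x b)
      _ = f x (f x x) := by rw [const f hC hQ hE (f x b) x]
      _ = f x x := N1 f hC hQ hE x
      _ = f (f x b) (f x b) := const f hC hQ hE x (f x b)
  exact antisym f hC hQ hE h1 h2

/-- `b ≤ x → b`. -/
theorem Kle (x b : A) : f b (f x b) = f b b := by
  rw [hE b x b, rightone f hC hQ hE]

/-- `x ≤ (x → b) → b`. -/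
theorem selfK (x b : A) : f x (f (f x b) b) = f x x := by
  rw [hE x (f x b) b, const f hC hQ hE (f x b) x]

/-- transitivity. -/
theorem transle {x y z : A} (h1 : f x y = f x x) (h2 : f y z = f y y) :
    f x z = f x x := by
  have hz : f (f z y) y = z := by
    have h := hQ y z
    rw [h2, leftid f hC hQ hE] at h
    exact h.symm
  calc f x z = f x (f (f z y) y) := by rw [hz]
    _ = f (f z y) (f x y) := hE x (f z y) y
    _ = f (f z y) (f x x) := by rw [h1]
    _ = f x x := rightone f hC hQ hE _ x

/-- monotone in second argument. -/
theorem mono {a b : A} (c : A) (h : f a b = f a a) :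
    f (f c a) (f c b) = f (f c a) (f c a) := by
  have hb : f (f b a) a = b := by
    have hq := hQ a b
    rw [h, leftid f hC hQ hE] at hq
    exact hq.symm
  calc f (f c a) (f c b) = f (f c a) (f c (f (f b a) a)) := by rw [hb]
    _ = f (f c a) (f (f b a) (f c a)) := by rw [hE c (f b a) a]
    _ = f (f c a) (f c a) := Kle f hC hQ hE (f b a) (f c a)

/-- antitone in first argument. -/
theorem antitone {a b : A} (c : A) (h : f a b = f a a) :
    f (f b c) (f a c) = f (f b c) (f b c) := by
  have h1 : f b (f (f c b) b) = f b b := Kle f hC hQ hE (f c b) b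
  have h2 : f a (f (f c b) b) = f a a := transle f hC hQ hE h h1
  calc f (f b c) (f a c) = f a (f (f b c) c) := (hE a (f b c) c).symm
    _ = f a (f (f c b) b) := by rw [hQ]
    _ = f a a := h2
    _ = f (f b c) (f b c) := const f hC hQ hE a (f b c)

/-- B combinator: `(x→y) ≤ (a→x)→(a→y)`. -/
theorem Ble (a x y : A) :
    f (f x y) (f (f a x) (f a y)) = f (f x y) (f x y) := by
  have hx : f (f a x) (f a (f (f y x) x)) = f (f a x) (f a x) :=
    mono f hC hQ hE a (Kle f hC hQ hE (f y x) x)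
  calc f (f x y) (f (f a x) (f a y))
      = f (f a x) (f (f x y) (f a y)) := hE (f x y) (f a x) (f a y)
    _ = f (f a x) (f a (f (f x y) y)) := by rw [hE (f x y) a y]
    _ = f (f a x) (f a (f (f y x) x)) := by rw [hQ x y]
    _ = f (f a x) (f a x) := hx
    _ = f (f x y) (f x y) := const f hC hQ hE _ _

/-- Frege: `(a→(x→y)) ≤ (a→x)→(a→y)`. -/
theorem frege (a x y : A) :
    f (f a (f x y)) (f (f a x) (f a y)) = f (f a (f x y)) (f a (f x y)) := by
  have h1 : f (f a (f x y)) (f a (f (f a x) (f a y)))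
      = f (f a (f x y)) (f a (f x y)) := mono f hC hQ hE a (Ble f hC hQ hE a x y)
  have h2 : f a (f (f a x) (f a y)) = f (f a x) (f a y) := by
    rw [hE a (f a x) (f a y), K2 f hC hQ hE]
  rw [h2] at h1
  exact h1

/-- key tautology: `(x→b) ≤ ((x→y)→b)→b`. -/
theorem T1le (x y b : A) :
    f (f x b) (f (f (f x y) b) b) = f (f x b) (f x b) := by
  set u := f x y with hu
  set c := f (f u b) b with hc
  have h1 : f (f x b) (f x c) = f (f x b) (f x b) :=
    mono f hC hQ hE x (Kle f hC hQ hE (f u b) b)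
  have h3 : f u c = f u u := selfK f hC hQ hE u b
  have h4 : f (f c x) (f u x) = f (f c x) (f c x) := antitone f hC hQ hE x h3
  have h5 : f u x = x := hC x y
  rw [h5] at h4
  -- h4 : f (f c x) x = f (f c x) (f c x)
  have h2 : f (f x c) c = f (f x c) (f x c) := by
    calc f (f x c) c = f (f c x) x := hQ x c
      _ = f (f c x) (f c x) := h4
      _ = f (f x c) (f x c) := const f hC hQ hE _ _
  exact transle f hC hQ hE h1 h2

/-- Separation: if `¬ a ≤ b` there is a Bool-valued homomorphism with
`g a = true` and `g b = false`. -/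
theorem sep [Finite A] {a b : A} (hab : f a b ≠ f a a) :
    ∃ g : A → Bool, (∀ x y, g (f x y) = (!g x || g y)) ∧ g a = true ∧ g b = false := by
  classical
  set S : Set (Set A) :=
    {F | ((∀ c, f c c ∈ F) ∧ ∀ x y, x ∈ F → f x y ∈ F → y ∈ F) ∧
      (∀ x, f a x = f a a → x ∈ F) ∧ b ∉ F} with hS
  have hF0S : {x | f a x = f a a} ∈ S := by
    refine ⟨⟨fun c => ?_, fun x y hx hxy => ?_⟩, fun x hx => hx, hab⟩
    · show f a (f c c) = f a a
      rw [rightone f hC hQ hE a c]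
      exact const f hC hQ hE c a
    · show f a y = f a a
      have eq := frege f hC hQ hE a x y
      rw [hxy, hx] at eq
      simp only [leftid f hC hQ hE] at eq
      exact eq
  obtain ⟨F, hFS, hmax⟩ :=
    Set.Finite.exists_maximalFor id S (Set.toFinite S) ⟨_, hF0S⟩
  obtain ⟨⟨hones, hMP⟩, hFa, hFb⟩ := hFS
  have hup : ∀ x y, y ∈ F → f x y ∈ F := by
    intro x y hy
    refine hMP y (f x y) hy ?_
    rw [Kle f hC hQ hE x y]
    exact hones y
  have step : ∀ x, x ∉ F → f x b ∈ F := by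
    intro x hx
    by_contra hxb
    have hGS : {z | f x z ∈ F} ∈ S := by
      refine ⟨⟨fun c => ?_, fun z w hz hzw => ?_⟩, fun x' hx' => hup x x' (hFa x' hx'), hxb⟩
      · show f x (f c c) ∈ F
        rw [rightone f hC hQ hE x c]
        exact hones c
      · show f x w ∈ F
        have h1 : f (f x (f z w)) (f (f x z) (f x w)) ∈ F := by
          rw [frege f hC hQ hE x z w]
          exact hones _
        exact hMP _ _ hz (hMP _ _ hzw h1)
    have hsub : F ⊆ {z | f x z ∈ F} := fun z hz => hup x z hz
    have heq : F = {z | f x z ∈ F} := le_antisymm hsub (hmax hGS hsub)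
    have hxG : x ∈ {z | f x z ∈ F} := hones x
    rw [← heq] at hxG
    exact hx hxG
  have homF : ∀ x y, f x y ∈ F ↔ (x ∉ F ∨ y ∈ F) := by
    intro x y
    constructor
    · intro hxy
      by_cases hx : x ∈ F
      · exact Or.inr (hMP x y hx hxy)
      · exact Or.inl hx
    · rintro (hx | hy)
      · by_contra hxy
        have h1 : f x b ∈ F := step x hx
        have h2 : f (f x y) b ∈ F := step (f x y) hxy
        have h3 : f (f x b) (f (f (f x y) b) b) ∈ F := by
          rw [T1le f hC hQ hE x y b]
          exact hones _
        exact hFb (hMP _ _ h2 (hMP _ _ h1 h3))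
      · exact hup x y hy
  refine ⟨fun x => decide (x ∈ F), ?_, ?_, ?_⟩
  · intro x y
    by_cases hy : y ∈ F
    · have h1 : f x y ∈ F := hup x y hy
      simp [h1, hy]
    · by_cases hx : x ∈ F
      · have h1 : f x y ∉ F := by
          intro h
          rcases (homF x y).1 h with h' | h'
          · exact h' hx
          · exact hy h'
        simp [h1, hx, hy]
      · have h1 : f x y ∈ F := (homF x y).2 (Or.inl hx)
        simp [h1, hx, hy]
  · simp only [decide_eq_true_eq]
    exact hFa a rfl
  · simp only [decide_eq_false_iff_not]
    exact hFb

end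

end ImpRep

/-- Every finite implication algebra has a finite representation: it embeds
into (℘(X), →) for some finite set X, where a → b = (X \ a) ∪ b. -/
theorem stmt_18 {A : Type u} [Finite A] (f : A → A → A)
    (contraction : ∀ a b, f (f a b) a = a)
    (quasicomm : ∀ a b, f (f a b) b = f (f b a) a)
    (exchange : ∀ a b c, f a (f b c) = f b (f a c)) :
    ∃ (X : Type u) (_ : Finite X) (h : A → Set X), Function.Injective h ∧
      ∀ a b, h (f a b) = (Set.univ \ h a) ∪ h b := by
  classical
  let X := {g : A → Bool // ∀ x y, g (f x y) = (!g x || g y)}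
  refine ⟨X, inferInstance, fun a => {g : X | g.1 a = true}, ?_, ?_⟩
  · intro a b hab
    by_contra hne
    have hab' : {g : X | g.1 a = true} = {g : X | g.1 b = true} := hab
    by_cases h1 : f a b = f a a
    · by_cases h2 : f b a = f b b
      · exact hne (ImpRep.antisym f contraction quasicomm exchange h1 h2)
      · obtain ⟨g, hg, hgb, hga⟩ := ImpRep.sep f contraction quasicomm exchange h2
        have hm : (⟨g, hg⟩ : X) ∈ {g : X | g.1 b = true} := hgb
        rw [← hab'] at hm
        have : g a = true := hm
        rw [hga] at this
        exact Bool.false_ne_true this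
    · obtain ⟨g, hg, hga, hgb⟩ := ImpRep.sep f contraction quasicomm exchange h1
      have hm : (⟨g, hg⟩ : X) ∈ {g : X | g.1 a = true} := hga
      rw [hab'] at hm
      have : g b = true := hm
      rw [hgb] at this
      exact Bool.false_ne_true this
  · intro a b
    ext g
    have hg := g.2 a b
    simp only [Set.mem_union, Set.mem_diff, Set.mem_univ, Set.mem_setOf_eq, true_and]
    rw [hg]
    cases ha : g.1 a <;> cases hb : g.1 b <;> simp
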